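/- If n is an even positive integer and f(n) is odd, then f(f(n)) ∈ {n − 2, n − 1}. -/

import Mathlib

/-- The map `f(n) = ⌊n/√2⌋` if `n` is even and `f(n) = ⌊n·√2⌋` if `n` is odd. -/
noncomputable def f (n : ℕ) : ℕ :=
  if Even n then ⌊(n : ℝ) / Real.sqrt 2⌋₊ else ⌊(n : ℝ) * Real.sqrt 2⌋₊

/-- If `n` is an even positive integer and `f(n)` is odd, then `f(f(n)) ∈ {n-2, n-1}`. -/
theorem f_f_even_odd (n : ℕ) (hn : 0 < n) (hne : Even n) (hfo : Odd (f n)) :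
    f (f n) = n - 2 ∨ f (f n) = n - 1 := by
  have hs0 : (0:ℝ) < Real.sqrt 2 := Real.sqrt_pos.mpr (by norm_num)
  have hsq : Real.sqrt 2 * Real.sqrt 2 = 2 := Real.mul_self_sqrt (by norm_num)
  have hs2 : Real.sqrt 2 < 2 := by nlinarith
  set m := f n with hm
  have hmdef : m = ⌊(n : ℝ) / Real.sqrt 2⌋₊ := by rw [hm, f, if_pos hne]
  have hm0 : m ≠ 0 := by
    rcases hfo with ⟨k, hk⟩; omega
  have hff : f m = ⌊(m : ℝ) * Real.sqrt 2⌋₊ := by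
    rw [f, if_neg (Nat.not_even_iff_odd.mpr hfo)]
  have hm1 : (m:ℝ) ≤ (n:ℝ) / Real.sqrt 2 := by
    rw [hmdef]; exact Nat.floor_le (by positivity)
  have hm2 : (n:ℝ) / Real.sqrt 2 < m + 1 := by
    rw [hmdef]; exact Nat.lt_floor_add_one _
  have hirr : Irrational ((m:ℝ) * Real.sqrt 2) := by
    have := irrational_sqrt_two.natCast_mul hm0
    simpa using this
  have hne1 : (m:ℝ) * Real.sqrt 2 ≠ (n:ℝ) := hirr.ne_nat n
  have hlt : (m:ℝ) * Real.sqrt 2 < n := by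
    have : (m:ℝ) * Real.sqrt 2 ≤ n := by
      have := mul_le_mul_of_nonneg_right hm1 hs0.le
      rwa [div_mul_cancel₀ _ hs0.ne'] at this
    exact lt_of_le_of_ne this hne1
  have hgt : (n:ℝ) - 2 < (m:ℝ) * Real.sqrt 2 := by
    have := mul_lt_mul_of_pos_right hm2 hs0
    rw [div_mul_cancel₀ _ hs0.ne'] at this
    nlinarith
  have hn2 : 2 ≤ n := by
    rcases hne with ⟨k, hk⟩; omega
  have hub : f m ≤ n - 1 := by
    rw [hff]
    have : ⌊(m : ℝ) * Real.sqrt 2⌋₊ < n := by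
      apply Nat.floor_lt (by positivity) |>.mpr hlt
    omega
  have hlb : n - 2 ≤ f m := by
    rw [hff]
    apply Nat.le_floor
    have : ((n - 2 : ℕ) : ℝ) = (n:ℝ) - 2 := by
      push_cast [hn2]; ring
    rw [this]; exact hgt.le
  omega
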